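/- Let m ≥ 1 be an integer, λ > 0, and X ~ Poisson(λ). Then Var((X)_m) = λ^m·m!·Σ_{k=0}^{m−1} C(m,k)·λ^k/k!; consequently λ ↦ Var((X)_m) is increasing in λ, and Var((X)_m) ≤ (λm)^m · max( (2e)^{2√(λm)}/(π·√(λm)), 1 ). -/

import Mathlib

open scoped BigOperators
open Real

noncomputable section

/-- The Poisson probability mass function with mean `t`. -/
def poissonPMF (t : ℝ) (m : ℕ) : ℝ := Real.exp (-t) * t ^ m / (m.factorial : ℝ)

/-- `E[(X)_m]` for `X ~ Poisson(λ)`, where `(x)_m` is the falling factorial. -/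
def fallingMean (lam : ℝ) (m : ℕ) : ℝ :=
  ∑' x : ℕ, poissonPMF lam x * (x.descFactorial m : ℝ)

/-- `Var((X)_m)` for `X ~ Poisson(λ)`. -/
def fallingVar (lam : ℝ) (m : ℕ) : ℝ :=
  (∑' x : ℕ, poissonPMF lam x * ((x.descFactorial m : ℝ)) ^ 2) - (fallingMean lam m) ^ 2

lemma poissonPMF_eq (t : ℝ) (n : ℕ) : poissonPMF t n = Real.exp (-t) * (t ^ n / n.factorial) := by
  rw [poissonPMF, mul_div_assoc]

lemma summable_poissonPMF (t : ℝ) : Summable (poissonPMF t) :=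
  ((Real.summable_pow_div_factorial t).mul_left (Real.exp (-t))).congr
    fun n => (poissonPMF_eq t n).symm

lemma tsum_poissonPMF (t : ℝ) : ∑' n, poissonPMF t n = 1 := by
  simp only [poissonPMF_eq]
  rw [tsum_mul_left]
  have h : ∑' n : ℕ, (t ^ n / n.factorial : ℝ) = Real.exp t := by
    rw [Real.exp_eq_exp_ℝ]
    exact (NormedSpace.expSeries_div_hasSum_exp t).tsum_eq
  rw [h, ← Real.exp_add]
  simp

lemma support_sub {m : ℕ} {f : ℕ → ℝ} (h : ∀ x, x < m → f x = 0) :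
    Function.support f ⊆ Set.range (fun y : ℕ => y + m) := by
  intro x hx
  rcases le_or_gt m x with hle | hlt
  · exact ⟨x - m, Nat.sub_add_cancel hle⟩
  · exact absurd (h x hlt) hx

lemma tsum_shift {m : ℕ} {f : ℕ → ℝ} (h : ∀ x, x < m → f x = 0) :
    ∑' y : ℕ, f (y + m) = ∑' x, f x :=
  Function.Injective.tsum_eq (add_left_injective m) (support_sub h)

lemma summable_shift {m : ℕ} {f : ℕ → ℝ} (h : ∀ x, x < m → f x = 0)
    (hs : Summable (fun y : ℕ => f (y + m))) : Summable f :=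
  ((add_left_injective m).summable_iff (by
    intro x hx
    rcases le_or_gt m x with hle | hlt
    · exact absurd ⟨x - m, Nat.sub_add_cancel hle⟩ hx
    · exact h x hlt)).mp hs

lemma poisson_term_shift (t : ℝ) (k y : ℕ) :
    poissonPMF t (y + k) * ((y + k).descFactorial k : ℝ) = t ^ k * poissonPMF t y := by
  have h0 : y.factorial * (y + k).descFactorial k = (y + k).factorial := by
    have := Nat.factorial_mul_descFactorial (n := y + k) (k := k) (Nat.le_add_left k y)
    simpa [Nat.add_sub_cancel] using this
  have h1 : ((y + k).factorial : ℝ) = (y.factorial : ℝ) * ((y + k).descFactorial k : ℝ) := by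
    exact_mod_cast h0.symm
  have hd : ((y + k).descFactorial k : ℝ) ≠ 0 := by
    have : ¬ (y + k < k) := by omega
    exact_mod_cast fun h => this (Nat.descFactorial_eq_zero_iff_lt.mp (by exact_mod_cast h))
  have hy : (y.factorial : ℝ) ≠ 0 := Nat.cast_ne_zero.mpr y.factorial_ne_zero
  rw [poissonPMF, poissonPMF, h1, pow_add]
  field_simp

lemma descFactorial_zero_of_lt {x m : ℕ} (h : x < m) : (x.descFactorial m : ℝ) = 0 := by
  exact_mod_cast congrArg (Nat.cast (R := ℝ)) (Nat.descFactorial_eq_zero_iff_lt.mpr h)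

lemma summable_moment (t : ℝ) (k : ℕ) :
    Summable (fun x : ℕ => poissonPMF t x * (x.descFactorial k : ℝ)) := by
  apply summable_shift (m := k)
  · intro x hx; rw [descFactorial_zero_of_lt hx, mul_zero]
  · simp only [poisson_term_shift]
    exact (summable_poissonPMF t).mul_left _

lemma tsum_moment (t : ℝ) (k : ℕ) :
    ∑' x : ℕ, poissonPMF t x * (x.descFactorial k : ℝ) = t ^ k := by
  rw [← tsum_shift (m := k) (fun x hx => by rw [descFactorial_zero_of_lt hx, mul_zero])]
  simp only [poisson_term_shift]
  rw [tsum_mul_left, tsum_poissonPMF, mul_one]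

lemma desc_vandermonde (y m : ℕ) :
    (y + m).descFactorial m
      = ∑ k ∈ Finset.range (m + 1),
          (m.choose k) ^ 2 * (m - k).factorial * y.descFactorial k := by
  rw [Nat.descFactorial_eq_factorial_mul_choose, Nat.add_choose_eq,
    Finset.Nat.sum_antidiagonal_eq_sum_range_succ (fun i j => y.choose i * m.choose j) m,
    Finset.mul_sum]
  refine Finset.sum_congr rfl fun k hk => ?_
  have hk' : k ≤ m := by simpa using Nat.lt_succ_iff.mp (Finset.mem_range.mp hk)
  rw [Nat.choose_symm hk', Nat.descFactorial_eq_factorial_mul_choose,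
    ← Nat.choose_mul_factorial_mul_factorial hk']
  ring

lemma tsum_sq_moment (t : ℝ) (m : ℕ) :
    ∑' x : ℕ, poissonPMF t x * ((x.descFactorial m : ℝ)) ^ 2
      = t ^ m * ∑ k ∈ Finset.range (m + 1),
          ((m.choose k : ℝ)) ^ 2 * ((m - k).factorial : ℝ) * t ^ k := by
  rw [← tsum_shift (m := m)
    (fun x hx => by rw [descFactorial_zero_of_lt hx]; ring)]
  have hterm : ∀ y : ℕ,
      poissonPMF t (y + m) * ((y + m).descFactorial m : ℝ) ^ 2
        = ∑ k ∈ Finset.range (m + 1),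
            t ^ m * (((m.choose k : ℝ)) ^ 2 * ((m - k).factorial : ℝ)) *
              (poissonPMF t y * (y.descFactorial k : ℝ)) := by
    intro y
    have h1 : poissonPMF t (y + m) * ((y + m).descFactorial m : ℝ) ^ 2
        = t ^ m * poissonPMF t y * ((y + m).descFactorial m : ℝ) := by
      rw [pow_two, ← mul_assoc, poisson_term_shift]
    have h2 : ((y + m).descFactorial m : ℝ)
        = ∑ k ∈ Finset.range (m + 1),
            ((m.choose k : ℝ)) ^ 2 * ((m - k).factorial : ℝ) * (y.descFactorial k : ℝ) := by
      exact_mod_cast congrArg (Nat.cast (R := ℝ)) (desc_vandermonde y m)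
    rw [h1, h2, Finset.mul_sum]
    exact Finset.sum_congr rfl fun k _ => by ring
  rw [tsum_congr hterm, Summable.tsum_finsetSum
    (fun k _ => ((summable_moment t k).mul_left _))]
  rw [Finset.mul_sum]
  refine Finset.sum_congr rfl fun k _ => ?_
  rw [tsum_mul_left, tsum_moment]
  ring

lemma fallingVar_eq (lam : ℝ) (m : ℕ) :
    fallingVar lam m
      = ∑ k ∈ Finset.range m,
          ((m.choose k : ℝ)) ^ 2 * ((m - k).factorial : ℝ) * lam ^ (m + k) := by
  rw [fallingVar, fallingMean, tsum_moment, tsum_sq_moment, Finset.sum_range_succ]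
  simp only [Nat.choose_self, Nat.sub_self, Nat.factorial_zero, Nat.cast_one, one_pow,
    one_mul, mul_one]
  rw [mul_add, Finset.mul_sum]
  have : lam ^ m * lam ^ m - (lam ^ m) ^ 2 = 0 := by ring
  rw [add_sub_assoc, this, add_zero]
  exact Finset.sum_congr rfl fun k _ => by rw [pow_add]; ring

lemma exp_one_mul_le_exp (t : ℝ) : Real.exp 1 * t ≤ Real.exp t := by
  have h := Real.add_one_le_exp (t - 1)
  have h2 : Real.exp t = Real.exp 1 * Real.exp (t - 1) := by
    rw [← Real.exp_add]; ring_nf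
  nlinarith [Real.exp_pos 1]

lemma fallingVar_formula (m : ℕ) (lam : ℝ) :
    fallingVar lam m
      = lam ^ m * (m.factorial : ℝ) *
          ∑ j ∈ Finset.range m, (m.choose j : ℝ) * lam ^ j / (j.factorial : ℝ) := by
  rw [fallingVar_eq, Finset.mul_sum]
  refine Finset.sum_congr rfl fun j hj => ?_
  have hj' : j ≤ m := le_of_lt (Finset.mem_range.mp hj)
  have hf : ((m.choose j : ℝ)) * (j.factorial : ℝ) * ((m - j).factorial : ℝ)
      = (m.factorial : ℝ) := by
    exact_mod_cast congrArg (Nat.cast (R := ℝ)) (Nat.choose_mul_factorial_mul_factorial hj')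
  have hjf : (j.factorial : ℝ) ≠ 0 := Nat.cast_ne_zero.mpr j.factorial_ne_zero
  rw [pow_add]
  field_simp
  linear_combination (lam ^ m * lam ^ j * (m.choose j : ℝ)) * hf

lemma fallingVar_mono (m : ℕ) {lam1 lam2 : ℝ} (h1 : 0 ≤ lam1) (h : lam1 ≤ lam2) :
    fallingVar lam1 m ≤ fallingVar lam2 m := by
  rw [fallingVar_eq, fallingVar_eq]
  refine Finset.sum_le_sum fun k _ => ?_
  exact mul_le_mul_of_nonneg_left (pow_le_pow_left₀ h1 h _) (by positivity)

/-- variance of the falling factorial of a Poisson random variable. -/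
theorem var_falling_factorial_poisson (m : ℕ) (hm : 1 ≤ m) (lam : ℝ) (hlam : 0 < lam) :
    fallingVar lam m
        = lam ^ m * (m.factorial : ℝ) *
            ∑ j ∈ Finset.range m, (m.choose j : ℝ) * lam ^ j / (j.factorial : ℝ) ∧
    (∀ lam1 lam2 : ℝ, 0 < lam1 → lam1 ≤ lam2 → fallingVar lam1 m ≤ fallingVar lam2 m) ∧
    fallingVar lam m ≤
      (lam * m) ^ m *
        max ((2 * Real.exp 1) ^ (2 * Real.sqrt (lam * m)) /
              (Real.pi * Real.sqrt (lam * m))) 1 := by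
  refine ⟨fallingVar_formula m lam, fun lam1 lam2 h1 h => fallingVar_mono m h1.le h, ?_⟩
  have hm1 : (1 : ℝ) ≤ (m : ℝ) := by exact_mod_cast hm
  have hlm : 0 < lam * m := by positivity
  set s : ℝ := Real.sqrt (lam * m) with hs_def
  have hs : 0 < s := Real.sqrt_pos.mpr hlm
  have hs2 : s ^ 2 = lam * m := Real.sq_sqrt hlm.le
  -- Step 1: fallingVar ≤ (lam*m)^m * exp (2*s)
  have hA : lam ^ m * (m.factorial : ℝ) ≤ (lam * m) ^ m := by
    rw [mul_pow]
    refine mul_le_mul_of_nonneg_left ?_ (by positivity)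
    exact_mod_cast Nat.factorial_le_pow m
  have hB : ∑ j ∈ Finset.range m, (m.choose j : ℝ) * lam ^ j / (j.factorial : ℝ)
      ≤ Real.exp (2 * s) := by
    have hterm : ∀ j ∈ Finset.range m,
        (m.choose j : ℝ) * lam ^ j / (j.factorial : ℝ) ≤ (s ^ j / (j.factorial : ℝ)) ^ 2 := by
      intro j _
      have hd : ((m.choose j : ℝ)) * (j.factorial : ℝ) ≤ (m : ℝ) ^ j := by
        have := Nat.descFactorial_le_pow m j
        rw [Nat.descFactorial_eq_factorial_mul_choose] at this
        exact_mod_cast by rw [mul_comm]; exact_mod_cast this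
      have hsj : (s ^ j) ^ 2 = (lam * m) ^ j := by
        rw [← pow_mul, mul_comm j 2, pow_mul, hs2]
      have hjf : (0 : ℝ) < (j.factorial : ℝ) := by exact_mod_cast j.factorial_pos
      rw [div_pow, hsj, mul_pow]
      rw [div_le_div_iff₀ hjf (by positivity)]
      calc (m.choose j : ℝ) * lam ^ j * ((j.factorial : ℝ) ^ 2)
          = ((m.choose j : ℝ) * (j.factorial : ℝ)) * lam ^ j * (j.factorial : ℝ) := by ring
        _ ≤ (m : ℝ) ^ j * lam ^ j * (j.factorial : ℝ) := by
            refine mul_le_mul_of_nonneg_right (mul_le_mul_of_nonneg_right hd (by positivity))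
              hjf.le
        _ = lam ^ j * (m : ℝ) ^ j * (j.factorial : ℝ) := by ring
    calc ∑ j ∈ Finset.range m, (m.choose j : ℝ) * lam ^ j / (j.factorial : ℝ)
        ≤ ∑ j ∈ Finset.range m, (s ^ j / (j.factorial : ℝ)) ^ 2 :=
          Finset.sum_le_sum hterm
      _ ≤ (∑ j ∈ Finset.range m, s ^ j / (j.factorial : ℝ)) ^ 2 :=
          Finset.sum_sq_le_sq_sum_of_nonneg (fun i _ => by positivity)
      _ ≤ (Real.exp s) ^ 2 := by
          refine pow_le_pow_left₀ (Finset.sum_nonneg fun i _ => by positivity) ?_ 2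
          exact Real.sum_le_exp_of_nonneg hs.le m
      _ = Real.exp (2 * s) := by rw [← Real.exp_nat_mul]; norm_num [mul_comm]
  have step1 : fallingVar lam m ≤ (lam * m) ^ m * Real.exp (2 * s) := by
    rw [fallingVar_formula]
    refine mul_le_mul hA hB (Finset.sum_nonneg fun j _ => by positivity) (by positivity)
  -- Step 2: exp (2*s) ≤ (2*exp 1)^(2*s) / (π*s)
  have step2 : Real.exp (2 * s) ≤ (2 * Real.exp 1) ^ (2 * s) / (Real.pi * s) := by
    rw [le_div_iff₀ (by positivity : (0:ℝ) < Real.pi * s)]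
    have hsplit : (2 * Real.exp 1) ^ (2 * s)
        = (2 : ℝ) ^ (2 * s) * Real.exp (2 * s) := by
      rw [Real.mul_rpow (by norm_num) (Real.exp_pos 1).le, Real.exp_one_rpow]
    rw [hsplit]
    have hps : Real.pi * s ≤ (2 : ℝ) ^ (2 * s) := by
      have h2s : (2 : ℝ) ^ (2 * s) = Real.exp (Real.log 2 * (2 * s)) :=
        Real.rpow_def_of_pos (by norm_num) _
      have hkey : Real.exp 1 * (Real.log 2 * (2 * s)) ≤ Real.exp (Real.log 2 * (2 * s)) :=
        exp_one_mul_le_exp _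
      have hconst : Real.pi ≤ Real.exp 1 * (Real.log 2 * 2) := by
        nlinarith [Real.pi_lt_d2, Real.exp_one_gt_d9, Real.log_two_gt_d9]
      calc Real.pi * s ≤ (Real.exp 1 * (Real.log 2 * 2)) * s :=
            mul_le_mul_of_nonneg_right hconst hs.le
        _ = Real.exp 1 * (Real.log 2 * (2 * s)) := by ring
        _ ≤ (2 : ℝ) ^ (2 * s) := h2s ▸ hkey
    calc Real.exp (2 * s) * (Real.pi * s)
        ≤ Real.exp (2 * s) * (2 : ℝ) ^ (2 * s) :=
          mul_le_mul_of_nonneg_left hps (Real.exp_pos _).le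
      _ = (2 : ℝ) ^ (2 * s) * Real.exp (2 * s) := mul_comm _ _
  calc fallingVar lam m ≤ (lam * m) ^ m * Real.exp (2 * s) := step1
    _ ≤ (lam * m) ^ m * ((2 * Real.exp 1) ^ (2 * s) / (Real.pi * s)) :=
        mul_le_mul_of_nonneg_left step2 (by positivity)
    _ ≤ (lam * m) ^ m *
        max ((2 * Real.exp 1) ^ (2 * s) / (Real.pi * s)) 1 :=
        mul_le_mul_of_nonneg_left (le_max_left _ _) (by positivity)
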